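/- In a CC-loop, if c is a power-associative WIP element, then E_c² = I: for all x, (((x·c)·c⁻¹)·c)·c⁻¹ = x, where c⁻¹ := c\1. -/
import Mathlib


/-- A loop: a type with multiplication, identity, and two-sided division. -/
class Loop (Q : Type*) extends Mul Q, One Q where
  ld : Q → Q → Q  -- left division: `ld x y = x \ y`
  rd : Q → Q → Q  -- right division: `rd x y = x / y`
  one_mul : ∀ x : Q, 1 * x = x
  mul_one : ∀ x : Q, x * 1 = x
  mul_ld : ∀ x y : Q, x * ld x y = y
  ld_mul : ∀ x y : Q, ld x (x * y) = y
  rd_mul : ∀ x y : Q, rd x y * y = x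
  mul_rd : ∀ x y : Q, rd (x * y) y = x

namespace Loop

variable {Q : Type*} [Loop Q]

/-- A conjugacy closed loop (CC-loop). -/
def IsCC (Q : Type*) [Loop Q] : Prop :=
  (∀ x y z : Q, x * (y * z) = rd (x * y) x * (x * z)) ∧
  (∀ x y z : Q, (z * y) * x = (z * x) * ld x (y * x))

/-- The nucleus `N(Q)`. -/
def nucleus (Q : Type*) [Loop Q] : Set Q :=
  {a | (∀ x y : Q, a * (x * y) = (a * x) * y) ∧
       (∀ x y : Q, x * (a * y) = (x * a) * y) ∧
       (∀ x y : Q, x * (y * a) = (x * y) * a)}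

/-- A subloop: contains 1 and is closed under `·`, `\`, `/`. -/
def IsSubloop (S : Set Q) : Prop :=
  (1 : Q) ∈ S ∧ (∀ a ∈ S, ∀ b ∈ S, a * b ∈ S) ∧
  (∀ a ∈ S, ∀ b ∈ S, ld a b ∈ S) ∧ (∀ a ∈ S, ∀ b ∈ S, rd a b ∈ S)

/-- The subloop generated by a set `S`. -/
def closure (S : Set Q) : Set Q := ⋂₀ {T : Set Q | IsSubloop T ∧ S ⊆ T}

/-- An element is power-associative if the subloop it generates is associative. -/
def IsPA (a : Q) : Prop :=
  ∀ x ∈ closure {a}, ∀ y ∈ closure {a}, ∀ z ∈ closure {a}, x * (y * z) = (x * y) * z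

/-- Powers: `pow a 0 = 1`, `pow a (n+1) = a * pow a n`. -/
def pow (a : Q) : ℕ → Q
  | 0 => 1
  | n + 1 => a * pow a n

/-- A WIP (weak inverse property) element. -/
def IsWIP (c : Q) : Prop := ∀ x : Q, c * ld (x * c) 1 = ld x 1

end Loop

open Loop

/-- Main computational lemma: in a CC-loop, if `cp` is a two-sided inverse of the
WIP element `c`, then `E_c² = I`. -/
theorem aux_stmt14 {Q : Type*} [Loop Q]
    (hl : ∀ x y z : Q, x * (y * z) = rd (x * y) x * (x * z))
    (hr : ∀ x y z : Q, (z * y) * x = (z * x) * ld x (y * x))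
    (c cp : Q) (h1 : c * cp = 1) (h2 : cp * c = 1)
    (hw : ∀ x : Q, c * ld (x * c) 1 = ld x 1) :
    ∀ x : Q, (((x * c) * cp) * c) * cp = x := by
  have hu : ld c 1 = cp := by rw [← h1, Loop.ld_mul]
  have b3 : rd (1 : Q) c = cp := by rw [← h2, Loop.mul_rd]
  have l16 : ∀ a b : Q, ld (rd a b) a = b := fun a b => by
    have e := Loop.ld_mul (rd a b) b; rwa [Loop.rd_mul] at e
  have l17 : ∀ a b : Q, rd b (ld a b) = a := fun a b => by
    have e := Loop.mul_rd a (ld a b); rwa [Loop.mul_ld] at e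
  have jk : ∀ w : Q, rd 1 (ld w 1) = w := fun w => by
    have e := Loop.mul_rd w (ld w 1); rwa [Loop.mul_ld] at e
  have kj : ∀ w : Q, ld (rd 1 w) 1 = w := fun w => by
    have e := Loop.ld_mul (rd 1 w) w; rwa [Loop.rd_mul] at e
  -- CC instances
  have L19 : ∀ x : Q, c * (x * cp) = rd (c * x) c := fun x => by
    have e := hl c x cp; rwa [h1, Loop.mul_one] at e
  have L23 : ∀ x : Q, (cp * x) * c = ld c (x * c) := fun x => by
    have e := hr c x cp; rwa [h2, Loop.one_mul] at e
  have L108 : ∀ x : Q, cp * (x * c) = rd (cp * x) cp := fun x => by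
    have e := hl cp x c; rwa [h2, Loop.mul_one] at e
  have L232 : ∀ x : Q, (c * x) * cp = ld cp (x * cp) := fun x => by
    have e := hr cp x c; rwa [h1, Loop.one_mul] at e
  have L20 : c * (cp * cp) = cp := by
    have e := L19 cp; rwa [h1, b3] at e
  have L21 : ld c cp = cp * cp := by
    have e := Loop.ld_mul c (cp * cp); rwa [L20] at e
  have L24 : (cp * cp) * c = cp := by
    have e := L23 cp; rwa [h2, hu] at e
  have L26 : rd cp c = cp * cp := by
    have e := Loop.mul_rd (cp * cp) c; rwa [L24] at e
  -- WIP forms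
  have L27 : ∀ x : Q, ld (x * c) 1 = ld c (ld x 1) := fun x => by
    have e := Loop.ld_mul c (ld (x * c) 1); rw [hw x] at e; exact e.symm
  have L28 : ∀ x : Q, ld (rd x c) 1 = c * ld x 1 := fun x => by
    have e := hw (rd x c); rw [Loop.rd_mul] at e; exact e.symm
  -- chain
  have L29 : ∀ x : Q, c * (ld c x * cp) = rd x c := fun x => by
    have e := L19 (ld c x); rwa [Loop.mul_ld] at e
  have L46 : ∀ x : Q, ld c (rd x c) = ld c x * cp := fun x => by
    rw [← L29 x, Loop.ld_mul]
  have L61 : ∀ x : Q, ((cp * x) * c) * cp = ld c x := fun x => by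
    have e := L46 (x * c); rw [Loop.mul_rd, ← L23 x] at e; exact e.symm
  have L71 : ∀ x : Q, ld ((cp * x) * c) (ld c x) = cp := fun x => by
    rw [← L61 x]; exact Loop.ld_mul _ _
  have L72 : ∀ x : Q, rd (ld c x) cp = (cp * x) * c := fun x => by
    rw [← L61 x, Loop.mul_rd]
  have L80 : ∀ x : Q, (cp * (c * x)) * c = rd x cp := fun x => by
    have e := L72 (c * x); rw [Loop.ld_mul] at e; exact e.symm
  have L77 : ∀ x : Q, rd (rd x cp) c = cp * (c * x) := fun x => by
    rw [← L80 x, Loop.mul_rd]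
  have L33 : ∀ x : Q, c * ((cp * x) * c) = x * c := fun x => by
    rw [L23 x]; exact Loop.mul_ld _ _
  have L52 : ∀ x : Q, ld cp x * c = c * (x * c) := fun x => by
    have e := L33 (ld cp x); rw [Loop.mul_ld] at e; exact e.symm
  have L63 : ∀ x : Q, ld (ld cp x) (c * (x * c)) = c := fun x => by
    rw [← L52 x]; exact Loop.ld_mul _ _
  have L116 : ∀ x : Q, cp * (c * (x * c)) = rd x cp := fun x => by
    have e := L108 (ld cp x); rwa [Loop.mul_ld, L52] at e
  have L122 : ∀ x : Q, ld cp (rd x cp) = c * (x * c) := fun x => by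
    rw [← L116 x]; exact Loop.ld_mul _ _
  have L132 : ∀ x : Q, c * ((x * cp) * c) = ld cp x := fun x => by
    have e := L122 (x * cp); rw [Loop.mul_rd] at e; exact e.symm
  have L146 : ∀ x : Q, ld (ld cp (x * cp)) (ld cp x) = c := fun x => by
    have e := L63 (x * cp); rwa [L132] at e
  have L236 : ∀ x : Q, ld ((c * x) * cp) (ld cp x) = c := fun x => by
    rw [L232 x]; exact L146 x
  have L242 : ∀ x : Q, ld ((c * (cp * x)) * cp) x = c := fun x => by
    have e := L236 (cp * x); rwa [Loop.ld_mul] at e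
  have L252 : ∀ x : Q, (c * (cp * x)) * cp = rd x c := fun x => by
    have e := l17 ((c * (cp * x)) * cp) x; rw [L242 x] at e; exact e.symm
  -- WIP chain
  have L88 : ∀ x : Q, c * (ld c x * ld x 1) = 1 := fun x => by
    have e := hl c (ld c x) (ld x 1)
    rwa [Loop.mul_ld, ← L28 x, Loop.mul_ld] at e
  have L91 : ∀ x : Q, ld c x * ld x 1 = cp := fun x => by
    have e := Loop.ld_mul c (ld c x * ld x 1); rw [L88 x, hu] at e; exact e.symm
  have L90 : ∀ x : Q, x * ld (c * x) 1 = cp := fun x => by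
    have e := L91 (c * x); rwa [Loop.ld_mul] at e
  have L92 : ∀ x : Q, ld (c * x) 1 = ld x cp := fun x => by
    have e := Loop.ld_mul x (ld (c * x) 1); rw [L90 x] at e; exact e.symm
  have L94 : ∀ x : Q, rd cp (ld x 1) = ld c x := fun x => by
    have e := Loop.mul_rd (ld c x) (ld x 1); rwa [L91 x] at e
  have L97 : ∀ x : Q, rd 1 (ld x cp) = c * x := fun x => by
    rw [← L92 x]; exact jk (c * x)
  have L98 : ∀ x : Q, ld c (rd 1 x) = rd cp x := fun x => by
    have e := L94 (rd 1 x); rw [kj x] at e; exact e.symm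
  have L43 : ∀ x : Q, rd 1 (ld c (ld x 1)) = x * c := fun x => by
    rw [← L27 x]; exact jk (x * c)
  have L45 : ∀ x : Q, rd 1 (c * ld x 1) = rd x c := fun x => by
    rw [← L28 x]; exact jk (rd x c)
  have L58 : ∀ x : Q, rd 1 (ld c x) = rd 1 x * c := fun x => by
    have e := L43 (rd 1 x); rwa [kj x] at e
  have L34 : ∀ x : Q, (cp * rd x c) * c = ld c x := fun x => by
    have e := L23 (rd x c); rwa [Loop.rd_mul] at e
  have L54 : ∀ x : Q, rd (ld c x) c = cp * rd x c := fun x => by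
    rw [← L34 x, Loop.mul_rd]
  have L66 : ∀ x : Q, cp * (c * (x * cp)) = rd x c := fun x => by
    have e := L54 (c * x); rw [Loop.ld_mul, ← L19 x] at e; exact e.symm
  have L172 : ∀ x : Q, (cp * rd 1 x) * c = rd cp (ld c x) := fun x => by
    have e := L23 (rd 1 x); rwa [← L58 x, L98 (ld c x)] at e
  have L175 : ∀ x : Q, ld (rd cp (ld c x)) (rd cp x) = cp := fun x => by
    have e := L71 (rd 1 x); rwa [L172 x, L98 x] at e
  have L176 : ∀ x : Q, rd cp (ld c x) * cp = rd cp x := fun x => by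
    have e := Loop.mul_ld (rd cp (ld c x)) (rd cp x); rwa [L175 x] at e
  have L180 : ∀ x : Q, rd cp (c * x) = rd cp x * cp := fun x => by
    have e := L176 (c * x); rw [Loop.ld_mul] at e; exact e.symm
  have L40 : ∀ x : Q, (x * c) * ld c (ld x 1) = 1 := fun x => by
    rw [← L27 x]; exact Loop.mul_ld (x * c) 1
  have L57 : ∀ x : Q, (rd 1 x * c) * ld c x = 1 := fun x => by
    have e := L40 (rd 1 x); rwa [kj x] at e
  have L207 : ∀ x : Q, (rd 1 (x * c) * x) * c = 1 := fun x => by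
    have e := hr c x (rd 1 (x * c)); rwa [L57 (x * c)] at e
  have L210 : ∀ x : Q, rd 1 (x * c) * x = cp := fun x => by
    have e := Loop.mul_rd (rd 1 (x * c) * x) c; rw [L207 x, b3] at e; exact e.symm
  have L213 : ∀ x : Q, rd 1 (x * c) = rd cp x := fun x => by
    have e := Loop.mul_rd (rd 1 (x * c)) x; rw [L210 x] at e; exact e.symm
  have L212 : ∀ x : Q, rd 1 x * rd x c = cp := fun x => by
    have e := L210 (rd x c); rwa [Loop.rd_mul] at e
  have L211 : ∀ x : Q, ld (rd 1 (x * c)) cp = x := fun x => by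
    have e := Loop.ld_mul (rd 1 (x * c)) x; rwa [L210 x] at e
  have L214 : ∀ x : Q, ld (rd 1 x) cp = rd x c := fun x => by
    have e := L211 (rd x c); rwa [Loop.rd_mul] at e
  have L219 : ∀ x : Q, rd (ld x 1) c = ld x cp := fun x => by
    have e := L214 (ld x 1); rw [jk x] at e; exact e.symm
  have L303 : ∀ x : Q, rd x c * (c * (ld x 1 * cp)) = cp := fun x => by
    have e := L212 (c * ld x 1); rwa [L45 x, ← L19 (ld x 1)] at e
  have L402 : ∀ x : Q, c * (x * (ld x cp * cp)) = cp := fun x => by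
    have e := hl c x (ld x cp * cp)
    have e2 := L303 (c * x)
    rw [L92 x] at e2
    rw [e2] at e; exact e
  have L403 : ∀ x : Q, x * (ld x cp * cp) = cp * cp := fun x => by
    have e := Loop.ld_mul c (x * (ld x cp * cp)); rw [L402 x, L21] at e; exact e.symm
  have L405 : ∀ x : Q, ld x (cp * cp) = ld x cp * cp := fun x => by
    have e := Loop.ld_mul x (ld x cp * cp); rwa [L403 x] at e
  have L265 : ∀ x : Q, ((cp * rd cp x) * x) * c = cp := fun x => by
    have e := hr c x (cp * rd cp x)
    rw [← L213 x, L172 (x * c), Loop.rd_mul] at e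
    rwa [L213 x] at e
  have L267 : ∀ x : Q, (cp * rd cp x) * x = cp * cp := fun x => by
    have e := Loop.mul_rd ((cp * rd cp x) * x) c; rw [L265 x, L26] at e; exact e.symm
  have L270 : ∀ x : Q, ld (cp * rd cp x) (cp * cp) = x := fun x => by
    have e := Loop.ld_mul (cp * rd cp x) x; rwa [L267 x] at e
  have L275 : ∀ x : Q, ld (cp * x) (cp * cp) = ld x cp := fun x => by
    have e := L270 (ld x cp); rwa [l17 x cp] at e
  have L410 : ∀ x : Q, ld (cp * x) cp * cp = ld x cp := fun x => by
    have e := L405 (cp * x); rw [L275 x] at e; exact e.symm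
  have L418 : ∀ x : Q, rd (ld x cp) cp = ld (cp * x) cp := fun x => by
    have e := Loop.mul_rd (ld (cp * x) cp) cp; rwa [L410 x] at e
  have L289 : ∀ x : Q, (x * c) * (cp * ld x cp) = cp := fun x => by
    have e := L212 (ld c (ld x 1))
    rwa [L43 x, L54 (ld x 1), L219 x] at e
  have L292 : ∀ x : Q, rd cp (cp * ld x cp) = x * c := fun x => by
    have e := Loop.mul_rd (x * c) (cp * ld x cp); rwa [L289 x] at e
  have L295 : ∀ x : Q, rd cp (cp * x) = rd cp x * c := fun x => by
    have e := L292 (rd cp x); rwa [l16 cp x] at e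
  have L311 : ∀ x : Q, (rd cp x * cp) * c = rd 1 (rd x cp) := fun x => by
    have e := L213 (cp * (c * x))
    rw [L80 x, L295 (c * x), L180 x] at e
    exact e.symm
  have L427 : ∀ x : Q, (x * cp) * c = c * (cp * x) := fun x => by
    have e := L311 (ld x cp)
    rwa [l17 x cp, L418 x, L97 (cp * x)] at e
  have L429 : ∀ x : Q, c * (cp * rd x cp) = x * c := fun x => by
    have e := L427 (rd x cp); rw [Loop.rd_mul] at e; exact e.symm
  have T2 : ∀ x : Q, (x * c) * cp = cp * (c * x) := fun x => by
    have e := L252 (rd x cp)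
    rwa [L429 x, L77 x] at e
  intro x
  calc (((x * c) * cp) * c) * cp = ((cp * (c * x)) * c) * cp := by rw [T2 x]
    _ = cp * (c * (cp * (c * x))) := T2 (cp * (c * x))
    _ = cp * (c * ((x * c) * cp)) := by rw [← T2 x]
    _ = rd (x * c) c := L66 (x * c)
    _ = x := Loop.mul_rd x c

/-- In a CC-loop, if `c` is a power-associative WIP element then `E_c² = I`. -/
theorem stmt_14 {Q : Type*} [Loop Q] (hcc : IsCC Q) (c : Q)
    (hpa : IsPA c) (hwip : IsWIP c) :
    ∀ x : Q, (((x * c) * ld c 1) * c) * ld c 1 = x := by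
  obtain ⟨hl, hr⟩ := hcc
  have hcm : c ∈ closure ({c} : Set Q) :=
    Set.mem_sInter.mpr fun T hT => hT.2 rfl
  have hcpm : ld c 1 ∈ closure ({c} : Set Q) :=
    Set.mem_sInter.mpr fun T hT => hT.1.2.2.1 c (hT.2 rfl) 1 hT.1.1
  have h1 : c * ld c 1 = 1 := Loop.mul_ld c 1
  have h2 : ld c 1 * c = 1 := by
    have e := hpa (ld c 1) hcpm c hcm (ld c 1) hcpm
    rw [Loop.mul_ld, Loop.mul_one] at e
    -- e : ld c 1 = (ld c 1 * c) * ld c 1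
    have e2 := Loop.mul_rd (ld c 1 * c) (ld c 1)
    rw [← e] at e2
    -- e2 : rd (ld c 1) (ld c 1) = ld c 1 * c
    have e3 := Loop.mul_rd (1 : Q) (ld c 1)
    rw [Loop.one_mul] at e3
    rw [e3] at e2
    exact e2.symm
  exact aux_stmt14 hl hr c (ld c 1) h1 h2 hwip
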